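/- Let τ > 0, μ ∈ ℝ, i ∈ {1,2}, let v(s) = (2/√τ)·( (−2μ/√τ)·(1 − cos(√τ·s)) + (−1)^i·sin(√τ·s) ), s_i its first positive zero, and define f(s) = (−1)^i·v'(s)/√(4·v(s)² + v'(s)²) on [0, s_i] (the denominator never vanishes there). Then f(s_i − s) = −f(s) for all s ∈ [0, s_i]. -/

import Mathlib

open Real

theorem stmt_4 (τ μ : ℝ) (hτ : 0 < τ) (i : ℕ) (hi : i = 1 ∨ i = 2) (v : ℝ → ℝ)
    (hv : ∀ s : ℝ, v s = (2 / Real.sqrt τ) *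
      ((-2 * μ / Real.sqrt τ) * (1 - Real.cos (Real.sqrt τ * s))
        + (-1 : ℝ) ^ i * Real.sin (Real.sqrt τ * s)))
    (si : ℝ) (hsi : si ∈ Set.Ioo 0 (2 * π / Real.sqrt τ)) (hz : v si = 0)
    (hfirst : ∀ s ∈ Set.Ioo 0 si, v s ≠ 0)
    (f : ℝ → ℝ)
    (hf : ∀ s : ℝ, f s =
      (-1 : ℝ) ^ i * deriv v s / Real.sqrt (4 * v s ^ 2 + (deriv v s) ^ 2)) :
    (∀ s ∈ Set.Icc 0 si, 4 * v s ^ 2 + (deriv v s) ^ 2 ≠ 0) ∧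
    ∀ s ∈ Set.Icc 0 si, f (si - s) = - f s := by
  have hω : 0 < Real.sqrt τ := Real.sqrt_pos.mpr hτ
  set ω : ℝ := Real.sqrt τ with hωdef
  set a : ℝ := -2 * μ / ω with hadef
  set b : ℝ := (-1 : ℝ) ^ i with hbdef
  have hωne : ω ≠ 0 := ne_of_gt hω
  have hb2 : b ^ 2 = 1 := by
    rw [hbdef, ← pow_mul, mul_comm, pow_mul]; norm_num
  have hfun : v = fun s => (2 / ω) * (a * (1 - Real.cos (ω * s)) + b * Real.sin (ω * s)) :=
    funext fun s => hv s
  -- derivative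
  have hder : ∀ s : ℝ, HasDerivAt v (2 * (a * Real.sin (ω * s) + b * Real.cos (ω * s))) s := by
    intro s
    have hωs : HasDerivAt (fun x : ℝ => ω * x) ω s := by
      simpa using (hasDerivAt_id s).const_mul ω
    have hcos : HasDerivAt (fun x : ℝ => Real.cos (ω * x)) (-Real.sin (ω * s) * ω) s :=
      (Real.hasDerivAt_cos (ω * s)).comp s hωs
    have hsin : HasDerivAt (fun x : ℝ => Real.sin (ω * x)) (Real.cos (ω * s) * ω) s :=
      (Real.hasDerivAt_sin (ω * s)).comp s hωs
    have h1 := (((hasDerivAt_const s (1 : ℝ)).sub hcos).const_mul a).add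
      (hsin.const_mul b) |>.const_mul (2 / ω)
    rw [hfun]
    refine HasDerivAt.congr_deriv h1 ?_
    field_simp
    ring
  have hdval : ∀ s : ℝ, deriv v s = 2 * (a * Real.sin (ω * s) + b * Real.cos (ω * s)) :=
    fun s => (hder s).deriv
  -- equation at si
  have E1 : a * (1 - Real.cos (ω * si)) + b * Real.sin (ω * si) = 0 := by
    have h := hz
    rw [hv] at h
    have h2ω : (2 / ω) ≠ 0 := by positivity
    rw [hωdef] at h2ω ⊢
    exact (mul_eq_zero.mp h).resolve_left h2ω
  have hcne : Real.cos (ω * si) ≠ 1 := by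
    have h1 : 0 < ω * si := mul_pos hω hsi.1
    have h2 : ω * si < 2 * π := by
      have := hsi.2
      calc ω * si < ω * (2 * π / ω) := by
            exact (mul_lt_mul_iff_right₀ hω).mpr this
        _ = 2 * π := by field_simp
    intro hc
    have := (Real.cos_eq_one_iff_of_lt_of_lt (by linarith [h1, Real.two_pi_pos]) h2).mp hc
    linarith
  have P : Real.sin (ω * si) ^ 2 + Real.cos (ω * si) ^ 2 = 1 := Real.sin_sq_add_cos_sq _
  have E2 : a * Real.sin (ω * si) + b * (1 + Real.cos (ω * si)) = 0 := by
    have key : (1 - Real.cos (ω * si)) *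
        (a * Real.sin (ω * si) + b * (1 + Real.cos (ω * si))) = 0 := by
      linear_combination Real.sin (ω * si) * E1 - b * P
    rcases mul_eq_zero.mp key with h | h
    · exact absurd (by linarith : Real.cos (ω * si) = 1) hcne
    · exact h
  -- symmetry of v and deriv v
  have vsym : ∀ s : ℝ, v (si - s) = v s := by
    intro s
    rw [hv, hv, show ω * (si - s) = ω * si - ω * s from mul_sub ω si s,
      Real.cos_sub, Real.sin_sub]
    linear_combination (2 / ω) * Real.cos (ω * s) * E1 - (2 / ω) * Real.sin (ω * s) * E2
  have dsym : ∀ s : ℝ, deriv v (si - s) = - deriv v s := by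
    intro s
    rw [hdval, hdval, show ω * (si - s) = ω * si - ω * s from mul_sub ω si s,
      Real.cos_sub, Real.sin_sub]
    linear_combination 2 * Real.cos (ω * s) * E2 + 2 * Real.sin (ω * s) * E1
  -- nonvanishing
  have hnz : ∀ s : ℝ, 4 * v s ^ 2 + (deriv v s) ^ 2 ≠ 0 := by
    intro s h
    have hv0 : v s = 0 := by nlinarith [sq_nonneg (v s), sq_nonneg (deriv v s)]
    have hd0 : deriv v s = 0 := by nlinarith [sq_nonneg (v s), sq_nonneg (deriv v s)]
    set S : ℝ := Real.sin (ω * s) with hS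
    set C : ℝ := Real.cos (ω * s) with hC
    have F1 : a * (1 - C) + b * S = 0 := by
      have h := hv0
      rw [hv] at h
      have h2ω : (2 / ω) ≠ 0 := by positivity
      exact (mul_eq_zero.mp h).resolve_left h2ω
    have F2 : a * S + b * C = 0 := by
      have h := hd0
      rw [hdval s] at h
      linarith [h]
    have Ps : S ^ 2 + C ^ 2 = 1 := Real.sin_sq_add_cos_sq _
    have h3 : a * S + b = 0 := by linear_combination S * F1 + C * F2 - b * Ps
    have hCb : b * C = b := by linear_combination F2 - h3
    have hC1 : C = 1 := by linear_combination b * hCb - (C - 1) * hb2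
    have hS0 : S ^ 2 = 0 := by linear_combination Ps - (C + 1) * hC1
    have hSz : S = 0 := by
      have := sq_eq_zero_iff.mp hS0
      exact this
    rw [hSz] at h3
    have hb0 : b = 0 := by linarith
    rw [hb0] at hb2
    norm_num at hb2
  refine ⟨fun s _ => hnz s, fun s _ => ?_⟩
  rw [hf, hf, vsym, dsym, neg_sq]
  ring
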